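/- For all real ρ > 0 and σ > 0: ∫_{ρ}^{∞} x²·(x − ρ)²·exp(−x²/(2σ²)) dx > σ²·∫_{ρ}^{∞} (x − ρ)²·exp(−x²/(2σ²)) dx, where both integrals are (finite) Lebesgue integrals over the interval [ρ, ∞). -/

import Mathlib

open MeasureTheory

open Real Filter Set Asymptotics in
theorem stmt11 (ρ σ : ℝ) (hρ : 0 < ρ) (hσ : 0 < σ) :
    σ ^ 2 * ∫ x in Set.Ici ρ, (x - ρ) ^ 2 * Real.exp (-x ^ 2 / (2 * σ ^ 2)) <
      ∫ x in Set.Ici ρ, x ^ 2 * (x - ρ) ^ 2 * Real.exp (-x ^ 2 / (2 * σ ^ 2)) := by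
  have hσ2 : (0:ℝ) < 2 * σ ^ 2 := by positivity
  have hb : (0:ℝ) < (2 * σ ^ 2)⁻¹ := by positivity
  set φ : ℝ → ℝ := fun x => Real.exp (-x ^ 2 / (2 * σ ^ 2)) with hφ
  -- integrability of x^n * φ on Ioi ρ
  have key : ∀ n : ℕ, IntegrableOn (fun x => x ^ n * φ x) (Set.Ioi ρ) := by
    intro n
    have h := (integrableOn_rpow_mul_exp_neg_mul_sq hb (s := (n:ℝ))
      (by exact_mod_cast neg_one_lt_zero.trans_le n.cast_nonneg)).mono_set
      (Set.Ioi_subset_Ioi hρ.le)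
    refine h.congr_fun (fun x hx => ?_) measurableSet_Ioi
    beta_reduce
    rw [Real.rpow_natCast]
    congr 1
    rw [hφ]; ring_nf
  -- integrability of polynomial * φ
  have hcomb : ∀ c0 c1 c2 c3 c4 : ℝ,
      IntegrableOn (fun x => (c0 + c1*x + c2*x^2 + c3*x^3 + c4*x^4) * φ x) (Set.Ioi ρ) := by
    intro c0 c1 c2 c3 c4
    have h := (((((key 0).const_mul c0).add ((key 1).const_mul c1)).add
      ((key 2).const_mul c2)).add ((key 3).const_mul c3)).add ((key 4).const_mul c4)
    refine IntegrableOn.congr_fun h (fun x _ => ?_) measurableSet_Ioi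
    simp only [Pi.add_apply]
    ring
  -- names for integrands
  have int1 : IntegrableOn (fun x => (x - ρ) ^ 2 * φ x) (Set.Ioi ρ) := by
    refine (hcomb (ρ^2) (-2*ρ) 1 0 0).congr_fun (fun x _ => ?_) measurableSet_Ioi
    ring
  have int2 : IntegrableOn (fun x => x ^ 2 * (x - ρ) ^ 2 * φ x) (Set.Ioi ρ) := by
    refine (hcomb 0 0 (ρ^2) (-2*ρ) 1).congr_fun (fun x _ => ?_) measurableSet_Ioi
    ring
  have int3 : IntegrableOn (fun x => x * (x - ρ) * φ x) (Set.Ioi ρ) := by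
    refine (hcomb 0 (-ρ) 1 0 0).congr_fun (fun x _ => ?_) measurableSet_Ioi
    ring
  -- the antiderivative
  set F : ℝ → ℝ := fun x => -σ^2 * (x * (x - ρ)^2) * φ x with hF
  set g : ℝ → ℝ := fun x =>
      x ^ 2 * (x - ρ) ^ 2 * φ x - σ ^ 2 * ((x - ρ) ^ 2 * φ x) - 2 * σ ^ 2 * (x * (x - ρ) * φ x)
    with hg
  have hderiv : ∀ x ∈ Set.Ici ρ, HasDerivAt F (g x) x := by
    intro x _
    have hexp : HasDerivAt (fun y : ℝ => Real.exp (-y ^ 2 / (2 * σ ^ 2)))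
        (Real.exp (-x ^ 2 / (2 * σ ^ 2)) * (-(2 * x ^ 1) / (2 * σ ^ 2))) x := by
      exact (((hasDerivAt_pow 2 x).neg.div_const (2 * σ ^ 2)).exp)
    have hpoly : HasDerivAt (fun y : ℝ => -σ^2 * (y * (y - ρ)^2))
        (-σ^2 * (1 * (x - ρ)^2 + x * (2 * (x - ρ)^1 * 1))) x := by
      exact ((hasDerivAt_id x).mul (((hasDerivAt_id x).sub_const ρ).pow 2)).const_mul (-σ^2)
    have := hpoly.mul hexp
    convert this using 1
    case e'_4 => rfl
    case e'_5 => rfl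
    case e'_8 => rfl
    have hσ' : σ ^ 2 ≠ 0 := by positivity
    simp only [hg, hφ, pow_one, mul_one, one_mul]
    field_simp
    ring
  -- tendsto 0 at top
  have hT : ∀ n : ℕ, Tendsto (fun x => x ^ n * φ x) atTop (nhds 0) := by
    intro n
    have hlo := rpow_mul_exp_neg_mul_sq_isLittleO_exp_neg hb (n : ℝ)
    have hexp0 : Tendsto (fun x : ℝ => Real.exp (-(1/2) * x)) atTop (nhds 0) := by
      have : Tendsto (fun x : ℝ => -(1/2) * x) atTop atBot :=
        (tendsto_const_mul_atBot_of_neg (by norm_num)).mpr tendsto_id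
      exact Real.tendsto_exp_atBot.comp this
    have h0 := hlo.tendsto_zero_of_tendsto hexp0
    refine h0.congr (fun x => ?_)
    rw [Real.rpow_natCast]
    simp only [hφ]
    congr 1
    ring_nf
  have hFt : Tendsto F atTop (nhds 0) := by
    have h := ((((hT 3).sub ((hT 2).const_mul (2*ρ))).add ((hT 1).const_mul (ρ^2))).const_mul
      (-σ^2))
    simp only [sub_zero, add_zero, mul_zero] at h
    refine h.congr (fun x => ?_)
    simp only [hF]
    ring
  -- integrability of g
  have hgint : IntegrableOn g (Set.Ioi ρ) :=
    (int2.sub (int1.const_mul (σ^2))).sub (int3.const_mul (2*σ^2))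
  -- FTC
  have hFTC := integral_Ioi_of_hasDerivAt_of_tendsto' hderiv hgint hFt
  have hFρ : F ρ = 0 := by rw [hF]; simp
  rw [hFρ, zero_sub, neg_zero] at hFTC
  -- split the integral of g
  have hsplit : ∫ x in Set.Ioi ρ, g x =
      (∫ x in Set.Ioi ρ, x ^ 2 * (x - ρ) ^ 2 * φ x)
        - σ ^ 2 * (∫ x in Set.Ioi ρ, (x - ρ) ^ 2 * φ x)
        - 2 * σ ^ 2 * (∫ x in Set.Ioi ρ, x * (x - ρ) * φ x) := by
    have ia : IntegrableOn
        (fun x => x ^ 2 * (x - ρ) ^ 2 * φ x - σ ^ 2 * ((x - ρ) ^ 2 * φ x)) (Set.Ioi ρ) :=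
      int2.sub (int1.const_mul (σ^2))
    have ib : IntegrableOn (fun x => 2 * σ ^ 2 * (x * (x - ρ) * φ x)) (Set.Ioi ρ) :=
      int3.const_mul (2*σ^2)
    simp only [hg]
    rw [integral_sub ia ib, integral_sub int2 (int1.const_mul (σ^2)),
      integral_const_mul, integral_const_mul]
  rw [hsplit] at hFTC
  -- positivity of the last integral
  have hpos : 0 < ∫ x in Set.Ioi ρ, x * (x - ρ) * φ x := by
    rw [setIntegral_pos_iff_support_of_nonneg_ae ?_ int3]
    · have hsub : Set.Ioi ρ ⊆ Function.support (fun x => x * (x - ρ) * φ x) ∩ Set.Ioi ρ := by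
        intro x hx
        refine ⟨?_, hx⟩
        have hx' : ρ < x := hx
        have : 0 < x * (x - ρ) * φ x := by
          apply mul_pos (mul_pos (hρ.trans hx') (by linarith)) (Real.exp_pos _)
        exact Function.mem_support.mpr this.ne'
      calc (0:ENNReal) < volume (Set.Ioi ρ) := by rw [Real.volume_Ioi]; exact ENNReal.zero_lt_top
        _ ≤ _ := measure_mono hsub
    · filter_upwards [ae_restrict_mem measurableSet_Ioi] with x hx
      have hx' : ρ < x := hx
      have h1 : 0 ≤ x * (x - ρ) := by nlinarith
      exact mul_nonneg h1 (Real.exp_pos _).le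
  -- conclude
  rw [MeasureTheory.integral_Ici_eq_integral_Ioi, MeasureTheory.integral_Ici_eq_integral_Ioi]
  simp only [hφ] at hFTC hpos
  have h2 : 0 < 2 * σ ^ 2 * ∫ x in Set.Ioi ρ, x * (x - ρ) * Real.exp (-x ^ 2 / (2 * σ ^ 2)) := by
    exact mul_pos hσ2 hpos
  linarith
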